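/- Let u be a bounded function on [0,T]×H̄ supported in [0,T]×B̄_R(x^0) for some x^0 ∈ ∂H, and suppose the cycloidal Hölder seminorm [u]_{C^α_s} and the sup norms of u, u_{x_i}, and the second-order weighted norms defining ‖u‖_{C^{2+α}_s} are finite. Then for every ε ∈ (0,1), ‖u‖_{C^α_s([0,T]×H̄)} ≤ ε ‖u‖_{C^{2+α}_s([0,T]×H̄)} + C ε^{-m} ‖u‖_{C([0,T]×H̄)}, where m = m(d,α) and C = C(T,R,d,α) are positive constants. -/

import Mathlib

/-- The cycloidal distance. -/
noncomputable def cyc (d : ℕ) (P Q : ℝ × (Fin (d + 1) → ℝ)) : ℝ :=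
  (∑ i, |P.2 i - Q.2 i|) /
      (Real.sqrt (P.2 (Fin.last d)) + Real.sqrt (Q.2 (Fin.last d)) +
        Real.sqrt (∑ i : Fin d, |P.2 i.castSucc - Q.2 i.castSucc|)) +
    Real.sqrt |P.1 - Q.1|

/-- The closed space-time domain `[0,T] × H̄`. -/
def domT (d : ℕ) (T : ℝ) : Set (ℝ × (Fin (d + 1) → ℝ)) :=
  {P | P.1 ∈ Set.Icc 0 T ∧ 0 ≤ P.2 (Fin.last d)}

/-- Sup norm of `f` over a set `S`. -/
noncomputable def supN (d : ℕ) (S : Set (ℝ × (Fin (d + 1) → ℝ)))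
    (f : ℝ × (Fin (d + 1) → ℝ) → ℝ) : ℝ :=
  sSup ((fun P => |f P|) '' S)

/-- Cycloidal Hölder seminorm of exponent `α` of `f` over a set `S`. -/
noncomputable def semiS (d : ℕ) (α : ℝ) (S : Set (ℝ × (Fin (d + 1) → ℝ)))
    (f : ℝ × (Fin (d + 1) → ℝ) → ℝ) : ℝ :=
  sSup ((fun PQ : (ℝ × (Fin (d + 1) → ℝ)) × (ℝ × (Fin (d + 1) → ℝ)) =>
    |f PQ.1 - f PQ.2| / (cyc d PQ.1 PQ.2) ^ α) '' (S ×ˢ S))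

/-- Cycloidal Hölder norm `‖f‖_{C^α_s(S)}`. -/
noncomputable def holderS (d : ℕ) (α : ℝ) (S : Set (ℝ × (Fin (d + 1) → ℝ)))
    (f : ℝ × (Fin (d + 1) → ℝ) → ℝ) : ℝ :=
  supN d S f + semiS d α S f

/-- The Daskalopoulos–Hamilton–Koch norm `‖u‖_{C^{2+α}_s(S)}`, expressed in terms
of `u`, its time derivative `ut`, spatial first derivatives `ux i`, and spatial
second derivatives `uxx i j`. -/
noncomputable def norm2S (d : ℕ) (α : ℝ) (S : Set (ℝ × (Fin (d + 1) → ℝ)))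
    (u ut : ℝ × (Fin (d + 1) → ℝ) → ℝ)
    (ux : Fin (d + 1) → ℝ × (Fin (d + 1) → ℝ) → ℝ)
    (uxx : Fin (d + 1) → Fin (d + 1) → ℝ × (Fin (d + 1) → ℝ) → ℝ) : ℝ :=
  holderS d α S u + holderS d α S ut + (⨆ i, holderS d α S (ux i)) +
    ⨆ i, ⨆ j, holderS d α S (fun P => P.2 (Fin.last d) * uxx i j P)

/-- Finiteness (boundedness) of all the quantities entering `norm2S`. -/
def FinNorm2 (d : ℕ) (α : ℝ) (S : Set (ℝ × (Fin (d + 1) → ℝ)))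
    (u ut : ℝ × (Fin (d + 1) → ℝ) → ℝ)
    (ux : Fin (d + 1) → ℝ × (Fin (d + 1) → ℝ) → ℝ)
    (uxx : Fin (d + 1) → Fin (d + 1) → ℝ × (Fin (d + 1) → ℝ) → ℝ) : Prop :=
  (BddAbove ((fun P => |u P|) '' S) ∧
    BddAbove ((fun PQ : (ℝ × (Fin (d + 1) → ℝ)) × (ℝ × (Fin (d + 1) → ℝ)) =>
      |u PQ.1 - u PQ.2| / (cyc d PQ.1 PQ.2) ^ α) '' (S ×ˢ S))) ∧
  (BddAbove ((fun P => |ut P|) '' S) ∧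
    BddAbove ((fun PQ : (ℝ × (Fin (d + 1) → ℝ)) × (ℝ × (Fin (d + 1) → ℝ)) =>
      |ut PQ.1 - ut PQ.2| / (cyc d PQ.1 PQ.2) ^ α) '' (S ×ˢ S))) ∧
  (∀ i, BddAbove ((fun P => |ux i P|) '' S) ∧
    BddAbove ((fun PQ : (ℝ × (Fin (d + 1) → ℝ)) × (ℝ × (Fin (d + 1) → ℝ)) =>
      |ux i PQ.1 - ux i PQ.2| / (cyc d PQ.1 PQ.2) ^ α) '' (S ×ˢ S))) ∧
  (∀ i j, BddAbove ((fun P => |P.2 (Fin.last d) * uxx i j P|) '' S) ∧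
    BddAbove ((fun PQ : (ℝ × (Fin (d + 1) → ℝ)) × (ℝ × (Fin (d + 1) → ℝ)) =>
      |PQ.1.2 (Fin.last d) * uxx i j PQ.1 - PQ.2.2 (Fin.last d) * uxx i j PQ.2| /
        (cyc d PQ.1 PQ.2) ^ α) '' (S ×ˢ S)))

/-- `ut`, `ux`, `uxx` really are the (one-sided, within the domain) time
derivative, first and second spatial partial derivatives of `u` on `[0,T] × H̄`. -/
def IsDerivs (d : ℕ) (T : ℝ) (u ut : ℝ × (Fin (d + 1) → ℝ) → ℝ)
    (ux : Fin (d + 1) → ℝ × (Fin (d + 1) → ℝ) → ℝ)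
    (uxx : Fin (d + 1) → Fin (d + 1) → ℝ × (Fin (d + 1) → ℝ) → ℝ) : Prop :=
  (∀ P ∈ domT d T, HasDerivWithinAt (fun τ => u (τ, P.2)) (ut P) (Set.Icc 0 T) P.1) ∧
  (∀ P ∈ domT d T, ∀ i, HasDerivWithinAt (fun s => u (P.1, Function.update P.2 i s))
      (ux i P) {s : ℝ | 0 ≤ Function.update P.2 i s (Fin.last d)} (P.2 i)) ∧
  (∀ P ∈ domT d T, ∀ i j, HasDerivWithinAt (fun s => ux i (P.1, Function.update P.2 j s))
      (uxx i j P) {s : ℝ | 0 ≤ Function.update P.2 j s (Fin.last d)} (P.2 j))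

/-- `u` has (spatial) compact support in the closed Euclidean ball `B̄_R(x⁰)`. -/
def SuppBall (d : ℕ) (R : ℝ) (x0 : Fin (d + 1) → ℝ)
    (u : ℝ × (Fin (d + 1) → ℝ) → ℝ) : Prop :=
  ∀ P : ℝ × (Fin (d + 1) → ℝ), R < Real.sqrt (∑ i, (P.2 i - x0 i) ^ 2) → u P = 0
section AuxInterp

variable {d : ℕ} {T : ℝ} {u ut : ℝ × (Fin (d + 1) → ℝ) → ℝ}
  {ux : Fin (d + 1) → ℝ × (Fin (d + 1) → ℝ) → ℝ}
  {uxx : Fin (d + 1) → Fin (d + 1) → ℝ × (Fin (d + 1) → ℝ) → ℝ}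

lemma sqrt_add_le' {a b : ℝ} (ha : 0 ≤ a) (hb : 0 ≤ b) :
    Real.sqrt (a + b) ≤ Real.sqrt a + Real.sqrt b := by
  rw [show Real.sqrt a + Real.sqrt b =
      Real.sqrt ((Real.sqrt a + Real.sqrt b) ^ 2) from
    (Real.sqrt_sq (by positivity)).symm]
  apply Real.sqrt_le_sqrt
  have h1 : Real.sqrt a ^ 2 = a := Real.sq_sqrt ha
  have h2 : Real.sqrt b ^ 2 = b := Real.sq_sqrt hb
  nlinarith [Real.sqrt_nonneg a, Real.sqrt_nonneg b]

lemma mvt_abs {f f' : ℝ → ℝ} {a b C : ℝ} (hC : 0 ≤ C)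
    (hd : ∀ x ∈ Set.Icc (min a b) (max a b),
      HasDerivWithinAt f (f' x) (Set.Icc (min a b) (max a b)) x)
    (hb : ∀ x ∈ Set.Icc (min a b) (max a b), |f' x| ≤ C) :
    |f b - f a| ≤ C * |b - a| := by
  rcases le_total a b with h | h
  · rw [min_eq_left h, max_eq_right h] at hd hb
    have := norm_image_sub_le_of_norm_deriv_le_segment' hd
      (fun x hx => hb x (Set.Ico_subset_Icc_self hx)) b (Set.right_mem_Icc.2 h)
    rw [Real.norm_eq_abs] at this
    calc |f b - f a| ≤ C * (b - a) := this
      _ ≤ C * |b - a| := by gcongr; exact le_abs_self _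
  · rw [min_eq_right h, max_eq_left h] at hd hb
    have := norm_image_sub_le_of_norm_deriv_le_segment' hd
      (fun x hx => hb x (Set.Ico_subset_Icc_self hx)) a (Set.right_mem_Icc.2 h)
    rw [Real.norm_eq_abs, abs_sub_comm] at this
    calc |f b - f a| ≤ C * (a - b) := this
      _ ≤ C * |b - a| := by gcongr; rw [abs_sub_comm]; exact le_abs_self _

lemma tele_abs (f : ℕ → ℝ) (n : ℕ) :
    |f 0 - f n| ≤ ∑ j ∈ Finset.range n, |f j - f (j + 1)| := by
  induction n with
  | zero => simp
  | succ n ih =>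
    rw [Finset.sum_range_succ]
    calc |f 0 - f (n + 1)| ≤ |f 0 - f n| + |f n - f (n + 1)| := abs_sub_le _ _ _
      _ ≤ _ := by linarith

lemma step_bound (hder : IsDerivs d T u ut ux uxx) {t : ℝ} (ht : t ∈ Set.Icc 0 T)
    {w : Fin (d + 1) → ℝ} (hw : 0 ≤ w (Fin.last d)) (k : Fin (d + 1)) {b : ℝ}
    (hbk : k = Fin.last d → 0 ≤ b) {A : ℝ} (hA0 : 0 ≤ A)
    (hA : ∀ i, ∀ P ∈ domT d T, |ux i P| ≤ A) :
    |u (t, Function.update w k b) - u (t, w)| ≤ A * |b - w k| := by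
  set a := w k with ha
  have hwmem : ∀ s ∈ Set.Icc (min a b) (max a b),
      0 ≤ Function.update w k s (Fin.last d) := by
    intro s hs
    by_cases hk : k = Fin.last d
    · subst hk
      rw [Function.update_self]
      have h0 : 0 ≤ min a b := le_min hw (hbk rfl)
      linarith [hs.1]
    · rw [Function.update_of_ne (Ne.symm hk)]
      exact hw
  have key : |u (t, Function.update w k b) - u (t, Function.update w k a)| ≤
      A * |b - a| := by
    apply mvt_abs (f := fun s => u (t, Function.update w k s))
      (f' := fun s => ux k (t, Function.update w k s)) hA0
    · intro s hs
      have hmem : ((t, Function.update w k s) : ℝ × (Fin (d + 1) → ℝ)) ∈ domT d T :=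
        ⟨ht, hwmem s hs⟩
      have h2 := hder.2.1 _ hmem k
      simp only [Function.update_idem, Function.update_self] at h2
      exact h2.mono (fun s' hs' => hwmem s' hs')
    · intro s hs
      exact hA k _ ⟨ht, hwmem s hs⟩
  rwa [Function.update_eq_self] at key

lemma time_diff (hder : IsDerivs d T u ut ux uxx) {t1 t2 : ℝ}
    (h1 : t1 ∈ Set.Icc 0 T) (h2 : t2 ∈ Set.Icc 0 T) {x : Fin (d + 1) → ℝ}
    (hx : 0 ≤ x (Fin.last d)) {B : ℝ} (hB0 : 0 ≤ B)
    (hB : ∀ P ∈ domT d T, |ut P| ≤ B) :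
    |u (t1, x) - u (t2, x)| ≤ B * |t1 - t2| := by
  have hsub : Set.Icc (min t2 t1) (max t2 t1) ⊆ Set.Icc 0 T := by
    intro τ hτ
    constructor
    · exact le_trans (le_min h2.1 h1.1) hτ.1
    · exact le_trans hτ.2 (max_le h2.2 h1.2)
  apply mvt_abs (f := fun τ => u (τ, x)) (f' := fun τ => ut (τ, x)) hB0
  · intro τ hτ
    exact (hder.1 (τ, x) ⟨hsub hτ, hx⟩).mono hsub
  · intro τ hτ
    exact hB _ ⟨hsub hτ, hx⟩

lemma space_diff (hder : IsDerivs d T u ut ux uxx) {t : ℝ} (ht : t ∈ Set.Icc 0 T)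
    {x y : Fin (d + 1) → ℝ} (hx : 0 ≤ x (Fin.last d)) (hy : 0 ≤ y (Fin.last d))
    {A : ℝ} (hA0 : 0 ≤ A) (hA : ∀ i, ∀ P ∈ domT d T, |ux i P| ≤ A) :
    |u (t, x) - u (t, y)| ≤ A * ∑ i, |x i - y i| := by
  set g : ℕ → (Fin (d + 1) → ℝ) := fun n i => if (i : ℕ) < n then y i else x i with hg
  set e : ℕ → ℝ := fun j => if h : j < d + 1 then |x ⟨j, h⟩ - y ⟨j, h⟩| else 0 with he
  have hg0 : g 0 = x := funext fun i => if_neg (by omega)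
  have hglast : g (d + 1) = y := funext fun i => if_pos i.isLt
  have hgpos : ∀ n, 0 ≤ g n (Fin.last d) := by
    intro n; dsimp only [g]; split
    · exact hy
    · exact hx
  have hstep : ∀ n (h : n < d + 1),
      g (n + 1) = Function.update (g n) ⟨n, h⟩ (y ⟨n, h⟩) := by
    intro n h; funext i
    rcases eq_or_ne i ⟨n, h⟩ with rfl | hne
    · rw [Function.update_self]
      exact if_pos (Nat.lt_succ_self n)
    · rw [Function.update_of_ne hne]
      have hin : (i : ℕ) ≠ n := fun hc => hne (Fin.ext hc)
      dsimp only [g]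
      by_cases h2 : (i : ℕ) < n
      · rw [if_pos (by omega), if_pos h2]
      · rw [if_neg (by omega), if_neg h2]
  have main : ∀ n, n ≤ d + 1 →
      |u (t, g n) - u (t, x)| ≤ A * ∑ j ∈ Finset.range n, e j := by
    intro n
    induction n with
    | zero => intro _; simp [hg0]
    | succ n ih =>
      intro h
      have hn : n < d + 1 := h
      set k : Fin (d + 1) := ⟨n, hn⟩ with hk
      have hbk : k = Fin.last d → 0 ≤ y k := fun hkl => by rw [hkl]; exact hy
      have e1 := step_bound hder ht (hgpos n) k hbk hA0 hA
      rw [← hstep n hn] at e1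
      have hgnk : g n k = x k := if_neg (Nat.lt_irrefl n)
      rw [hgnk] at e1
      have hodd : |y k - x k| = e n := by
        rw [abs_sub_comm, he]
        simp only [hn, dif_pos]
        rfl
      rw [hodd] at e1
      calc |u (t, g (n + 1)) - u (t, x)|
          ≤ |u (t, g (n + 1)) - u (t, g n)| + |u (t, g n) - u (t, x)| :=
            abs_sub_le _ _ _
        _ ≤ A * e n + A * ∑ j ∈ Finset.range n, e j := add_le_add e1 (ih (by omega))
        _ = A * ∑ j ∈ Finset.range (n + 1), e j := by
            rw [Finset.sum_range_succ]; ring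
  have hfin := main (d + 1) le_rfl
  rw [hglast] at hfin
  have hsum : ∑ j ∈ Finset.range (d + 1), e j = ∑ i, |x i - y i| := by
    rw [← Fin.sum_univ_eq_sum_range e (d + 1)]
    apply Finset.sum_congr rfl
    intro i _
    simp only [e, i.isLt, dif_pos, Fin.eta]
  rw [hsum] at hfin
  rw [abs_sub_comm] at hfin
  exact hfin

end AuxInterp


lemma cyc_nonneg (d : ℕ) (P Q : ℝ × (Fin (d + 1) → ℝ)) : 0 ≤ cyc d P Q := by
  unfold cyc
  have h1 : (0:ℝ) ≤ ∑ i, |P.2 i - Q.2 i| :=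
    Finset.sum_nonneg fun i _ => abs_nonneg _
  positivity

lemma supN_nonneg (d : ℕ) (S : Set (ℝ × (Fin (d + 1) → ℝ)))
    (f : ℝ × (Fin (d + 1) → ℝ) → ℝ) : 0 ≤ supN d S f :=
  Real.sSup_nonneg (by rintro _ ⟨P, _, rfl⟩; exact abs_nonneg _)

lemma semiS_nonneg (d : ℕ) (α : ℝ) (S : Set (ℝ × (Fin (d + 1) → ℝ)))
    (f : ℝ × (Fin (d + 1) → ℝ) → ℝ) : 0 ≤ semiS d α S f := by
  apply Real.sSup_nonneg
  rintro _ ⟨PQ, _, rfl⟩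
  exact div_nonneg (abs_nonneg _) (Real.rpow_nonneg (cyc_nonneg _ _ _) _)

lemma holderS_nonneg (d : ℕ) (α : ℝ) (S : Set (ℝ × (Fin (d + 1) → ℝ)))
    (f : ℝ × (Fin (d + 1) → ℝ) → ℝ) : 0 ≤ holderS d α S f :=
  add_nonneg (supN_nonneg d S f) (semiS_nonneg d α S f)

/-- Interpolation inequality (i): for `u ∈ C^{2+α}_s([0,T]×H̄)` compactly supported in
`[0,T]×B̄_R(x⁰)` with `x⁰ ∈ ∂H`, and every `ε ∈ (0,1)`,
`‖u‖_{C^α_s} ≤ ε ‖u‖_{C^{2+α}_s} + C ε^{-m} ‖u‖_C`, where `m = m(d,α) > 0` and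
`C = C(T,R,d,α) > 0`. -/
theorem interpolation_Calpha (d : ℕ) (hd : 1 ≤ d) (α : ℝ) (hα : α ∈ Set.Ioo (0 : ℝ) 1) :
    ∃ m : ℝ, 0 < m ∧ ∀ T R : ℝ, 0 < T → 0 < R →
      ∃ C : ℝ, 0 < C ∧
        ∀ (u ut : ℝ × (Fin (d + 1) → ℝ) → ℝ)
          (ux : Fin (d + 1) → ℝ × (Fin (d + 1) → ℝ) → ℝ)
          (uxx : Fin (d + 1) → Fin (d + 1) → ℝ × (Fin (d + 1) → ℝ) → ℝ)
          (x0 : Fin (d + 1) → ℝ),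
          x0 (Fin.last d) = 0 →
          SuppBall d R x0 u →
          IsDerivs d T u ut ux uxx →
          FinNorm2 d α (domT d T) u ut ux uxx →
          ∀ ε ∈ Set.Ioo (0 : ℝ) 1,
            holderS d α (domT d T) u ≤
              ε * norm2S d α (domT d T) u ut ux uxx +
                C * ε ^ (-m) * supN d (domT d T) u := by
  obtain ⟨hα0, hα1⟩ := hα
  have h1α : (0:ℝ) < 1 - α := by linarith
  set m : ℝ := α / (1 - α) with hmdef
  have hm : 0 < m := div_pos hα0 h1α
  refine ⟨m, hm, ?_⟩
  intro T R hT hR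
  set K : ℝ := 4 * Real.sqrt R + 5 with hK
  have hsR : 0 ≤ Real.sqrt R := Real.sqrt_nonneg R
  have hK1 : (1:ℝ) ≤ K := by rw [hK]; linarith
  have hKpos : (0:ℝ) < K := lt_of_lt_of_le one_pos hK1
  have hKm : (0:ℝ) < K ^ m := Real.rpow_pos_of_pos hKpos m
  refine ⟨2 * K ^ m + 1, by linarith, ?_⟩
  intro u ut ux uxx x0 hx0 hsupp hder hfin ε hε
  obtain ⟨hε0, hε1⟩ := hε
  set S := domT d T with hSdef
  set N := supN d S u with hNdef
  have hN0 : 0 ≤ N := supN_nonneg d S u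
  have hNle : ∀ P ∈ S, |u P| ≤ N := fun P hP => le_csSup hfin.1.1 ⟨P, hP, rfl⟩
  set B := holderS d α S ut with hBdef
  set A := ⨆ i, holderS d α S (ux i) with hAdef
  have hB0 : 0 ≤ B := holderS_nonneg d α S ut
  have hA0 : 0 ≤ A :=
    le_trans (holderS_nonneg d α S (ux 0))
      (le_ciSup (f := fun i : Fin (d + 1) => holderS d α S (ux i))
        (Set.Finite.bddAbove (Set.finite_range _)) (0 : Fin (d + 1)))
  have hBle : ∀ P ∈ S, |ut P| ≤ B := fun P hP =>
    le_trans (le_csSup hfin.2.1.1 ⟨P, hP, rfl⟩)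
      (le_add_of_nonneg_right (semiS_nonneg d α S ut))
  have hAle : ∀ i, ∀ P ∈ S, |ux i P| ≤ A := by
    intro i P hP
    calc |ux i P| ≤ supN d S (ux i) := le_csSup (hfin.2.2.1 i).1 ⟨P, hP, rfl⟩
      _ ≤ holderS d α S (ux i) := le_add_of_nonneg_right (semiS_nonneg d α S (ux i))
      _ ≤ A := le_ciSup (f := fun i : Fin (d + 1) => holderS d α S (ux i))
        (Set.Finite.bddAbove (Set.finite_range _)) i
  set δ : ℝ := (ε / K) ^ ((1:ℝ) / (1 - α)) with hδdef
  have hεK : 0 < ε / K := div_pos hε0 hKpos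
  have hεK1 : ε / K < 1 := (div_lt_one hKpos).2 (lt_of_lt_of_le hε1 hK1)
  have hδpos : 0 < δ := Real.rpow_pos_of_pos hεK _
  have hδlt1 : δ < 1 := Real.rpow_lt_one hεK.le hεK1 (by positivity)
  have hδ1α : δ ^ (1 - α) = ε / K := by
    rw [hδdef, ← Real.rpow_mul hεK.le, one_div_mul_eq_div, div_self h1α.ne',
      Real.rpow_one]
  have hδα : δ ^ α = (ε / K) ^ m := by
    rw [hδdef, ← Real.rpow_mul hεK.le, hmdef]
    congr 1
    field_simp
  have hεnm : (0:ℝ) < ε ^ (-m) := Real.rpow_pos_of_pos hε0 _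
  clear_value m K N B A δ
  have hRHS0 : 0 ≤ ε * (B + A) + 2 * K ^ m * ε ^ (-m) * N := by
    have h1 : 0 ≤ ε * (B + A) := mul_nonneg hε0.le (by linarith)
    have h2 : (0:ℝ) ≤ 2 * K ^ m * ε ^ (-m) * N :=
      mul_nonneg (mul_nonneg (by linarith) hεnm.le) hN0
    linarith
  have pair : ∀ t1 t2 : ℝ, ∀ x y : Fin (d + 1) → ℝ,
      ((t1, x) : ℝ × (Fin (d + 1) → ℝ)) ∈ S → ((t2, y) : ℝ × (Fin (d + 1) → ℝ)) ∈ S →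
      |u (t1, x) - u (t2, y)| / (cyc d (t1, x) (t2, y)) ^ α ≤
        ε * (B + A) + 2 * K ^ m * ε ^ (-m) * N := by
    intro t1 t2 x y hP hQ
    set s := cyc d ((t1, x) : ℝ × (Fin (d + 1) → ℝ)) (t2, y) with hs
    have hs0 : 0 ≤ s := cyc_nonneg d _ _
    rcases le_or_gt δ s with hcase | hcase
    · -- far apart : use sup norm
      have h1 : |u (t1, x) - u (t2, y)| ≤ 2 * N := by
        calc |u (t1, x) - u (t2, y)| ≤ |u (t1, x)| + |u (t2, y)| := abs_sub _ _
          _ ≤ N + N := add_le_add (hNle _ hP) (hNle _ hQ)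
          _ = 2 * N := by ring
      have h2 : δ ^ α ≤ s ^ α := Real.rpow_le_rpow hδpos.le hcase hα0.le
      have h3 : |u (t1, x) - u (t2, y)| / s ^ α ≤ 2 * N / δ ^ α :=
        div_le_div₀ (by linarith) h1 (Real.rpow_pos_of_pos hδpos α) h2
      have h4 : 2 * N / δ ^ α = 2 * K ^ m * ε ^ (-m) * N := by
        rw [hδα, Real.div_rpow hε0.le hKpos.le, Real.rpow_neg hε0.le]
        have hεm : (0:ℝ) < ε ^ m := Real.rpow_pos_of_pos hε0 m
        field_simp
      have h5 : 0 ≤ ε * (B + A) := mul_nonneg hε0.le (by linarith)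
      rw [h4] at h3
      linarith
    · -- close : use derivatives
      by_cases h00 : u (t1, x) = 0 ∧ u (t2, y) = 0
      · rw [h00.1, h00.2, sub_zero, abs_zero, zero_div]
        exact hRHS0
      have hxl : 0 ≤ x (Fin.last d) := hP.2
      have hyl : 0 ≤ y (Fin.last d) := hQ.2
      have hball : ∀ z : Fin (d + 1) → ℝ, ∀ τ : ℝ,
          u (τ, z) ≠ 0 → z (Fin.last d) ≤ R := by
        intro z τ hz
        have hle : Real.sqrt (∑ i, (z i - x0 i) ^ 2) ≤ R :=
          le_of_not_gt fun hc => hz (hsupp (τ, z) hc)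
        have h1 : (z (Fin.last d)) ^ 2 ≤ ∑ i, (z i - x0 i) ^ 2 := by
          have h2 : (z (Fin.last d) - x0 (Fin.last d)) ^ 2 ≤ ∑ i, (z i - x0 i) ^ 2 :=
            Finset.single_le_sum (f := fun i => (z i - x0 i) ^ 2)
              (fun i _ => sq_nonneg _) (Finset.mem_univ (Fin.last d))
          rwa [hx0, sub_zero] at h2
        calc z (Fin.last d) ≤ |z (Fin.last d)| := le_abs_self _
          _ = Real.sqrt ((z (Fin.last d)) ^ 2) := (Real.sqrt_sq_eq_abs _).symm
          _ ≤ Real.sqrt (∑ i, (z i - x0 i) ^ 2) := Real.sqrt_le_sqrt h1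
          _ ≤ R := hle
      have hxmin : min (x (Fin.last d)) (y (Fin.last d)) ≤ R := by
        rcases not_and_or.1 h00 with h | h
        · exact le_trans (min_le_left _ _) (hball x t1 h)
        · exact le_trans (min_le_right _ _) (hball y t2 h)
      set D := ∑ i, |x i - y i| with hD
      set D' := ∑ i : Fin d, |x i.castSucc - y i.castSucc| with hD'
      set den := Real.sqrt (x (Fin.last d)) + Real.sqrt (y (Fin.last d)) +
        Real.sqrt D' with hden
      set sx := D / den with hsx
      set st := Real.sqrt |t1 - t2| with hst
      have hseq : s = sx + st := rfl
      have hst2' : st ^ 2 = |t1 - t2| := Real.sq_sqrt (abs_nonneg _)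
      clear_value s sx st den D' D
      have hD0 : 0 ≤ D := by
        rw [hD]; exact Finset.sum_nonneg fun i _ => abs_nonneg _
      have hD'0 : 0 ≤ D' := by
        rw [hD']; exact Finset.sum_nonneg fun i _ => abs_nonneg _
      have hden0 : 0 ≤ den := by rw [hden]; positivity
      have hsx0 : 0 ≤ sx := by rw [hsx]; exact div_nonneg hD0 hden0
      have hst0 : 0 ≤ st := by rw [hst]; exact Real.sqrt_nonneg _
      have hsxs : sx ≤ s := by rw [hseq]; linarith
      have hsts : st ≤ s := by rw [hseq]; linarith
      have hDsplit : D = D' + |x (Fin.last d) - y (Fin.last d)| := by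
        rw [hD, hD', Fin.sum_univ_castSucc]
      have habsd : |x (Fin.last d) - y (Fin.last d)| ≤ D := by
        rw [hDsplit]; linarith
      have hD'le : D' ≤ D := by
        rw [hDsplit]; exact le_add_of_nonneg_right (abs_nonneg _)
      have hs1 : s ≤ 1 := le_trans hcase.le hδlt1.le
      -- key geometric estimate : D ≤ K * sx
      have hDK : D ≤ K * sx := by
        rcases hD0.eq_or_lt with hDz | hDz
        · rw [← hDz]; positivity
        · have hdenpos : 0 < den := by
            rcases hden0.eq_or_lt with he | hp
            · exfalso
              have n1 := Real.sqrt_nonneg (x (Fin.last d))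
              have n2 := Real.sqrt_nonneg (y (Fin.last d))
              have n3 := Real.sqrt_nonneg D'
              have hdeneq : Real.sqrt (x (Fin.last d)) + Real.sqrt (y (Fin.last d)) +
                  Real.sqrt D' = 0 := by rw [← hden]; exact he.symm
              have e1 : x (Fin.last d) = 0 :=
                (Real.sqrt_eq_zero hxl).1 (by linarith)
              have e2 : y (Fin.last d) = 0 :=
                (Real.sqrt_eq_zero hyl).1 (by linarith)
              have e3 : D' = 0 := (Real.sqrt_eq_zero hD'0).1 (by linarith)
              have : D = 0 := by rw [hDsplit, e1, e2, e3, sub_zero, abs_zero]; ring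
              linarith
            · exact hp
          have hsxden : sx * den = D := by
            rw [hsx]; exact div_mul_cancel₀ D hdenpos.ne'
          have hsx1 : sx ≤ 1 := le_trans hsxs hs1
          have hmaxb : max (x (Fin.last d)) (y (Fin.last d)) ≤ R + D := by
            have h1 : max (x (Fin.last d)) (y (Fin.last d)) -
                min (x (Fin.last d)) (y (Fin.last d)) =
                |y (Fin.last d) - x (Fin.last d)| := max_sub_min_eq_abs _ _
            have habsd' : |y (Fin.last d) - x (Fin.last d)| ≤ D := by
              rw [abs_sub_comm]; exact habsd
            linarith
          have hsqmin : Real.sqrt (min (x (Fin.last d)) (y (Fin.last d))) ≤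
              Real.sqrt R := Real.sqrt_le_sqrt hxmin
          have hsqmax : Real.sqrt (max (x (Fin.last d)) (y (Fin.last d))) ≤
              Real.sqrt R + Real.sqrt D :=
            le_trans (Real.sqrt_le_sqrt hmaxb) (sqrt_add_le' hR.le hD0)
          have hsum : Real.sqrt (x (Fin.last d)) + Real.sqrt (y (Fin.last d)) =
              Real.sqrt (min (x (Fin.last d)) (y (Fin.last d))) +
              Real.sqrt (max (x (Fin.last d)) (y (Fin.last d))) := by
            rcases le_total (x (Fin.last d)) (y (Fin.last d)) with h | h
            · rw [min_eq_left h, max_eq_right h]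
            · rw [min_eq_right h, max_eq_left h]; ring
          have hsqD' : Real.sqrt D' ≤ Real.sqrt D := Real.sqrt_le_sqrt hD'le
          have hdenle : den ≤ 2 * Real.sqrt R + 2 * Real.sqrt D := by
            rw [hden, hsum]; linarith
          have hsD : Real.sqrt D ^ 2 = D := Real.sq_sqrt hD0
          have step1 : sx * den ≤ sx * (2 * Real.sqrt R + 2 * Real.sqrt D) :=
            mul_le_mul_of_nonneg_left hdenle hsx0
          have step2 : 2 * sx * Real.sqrt D ≤ 2 * sx ^ 2 + D / 2 := by
            linarith only [sq_nonneg (2 * sx - Real.sqrt D), hsD]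
          have step3 : D ≤ 4 * Real.sqrt R * sx + 4 * sx ^ 2 := by
            linarith only [step1, step2, hsxden]
          rw [hK]
          linarith only [step3, hsx0, mul_nonneg hsR hsx0,
            mul_le_of_le_one_right hsx0 hsx1]
      -- difference bound via derivatives
      have e1 : |u (t1, x) - u (t2, x)| ≤ B * |t1 - t2| :=
        time_diff hder hP.1 hQ.1 hxl hB0 hBle
      have e2 : |u (t2, x) - u (t2, y)| ≤ A * D := by
        rw [hD]; exact space_diff hder hQ.1 hxl hyl hA0 hAle
      have hts : |u (t1, x) - u (t2, y)| ≤ B * |t1 - t2| + A * D :=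
        calc |u (t1, x) - u (t2, y)| ≤
            |u (t1, x) - u (t2, x)| + |u (t2, x) - u (t2, y)| := abs_sub_le _ _ _
          _ ≤ B * |t1 - t2| + A * D := add_le_add e1 e2
      have hst2 : |t1 - t2| ≤ s ^ 2 := by
        linarith only [hst2', mul_self_le_mul_self hst0 hsts, sq_nonneg st,
          (by ring : st * st = st ^ 2), (by ring : s * s = s ^ 2)]
      have hfull : |u (t1, x) - u (t2, y)| ≤ K * (A + B) * s := by
        linarith only [hts, mul_le_mul_of_nonneg_left hst2 hB0,
          mul_le_mul_of_nonneg_left hDK hA0,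
          mul_le_mul_of_nonneg_left hsxs (mul_nonneg hKpos.le hA0),
          mul_nonneg (mul_nonneg hB0 hs0) (sub_nonneg.2 hs1),
          mul_nonneg (mul_nonneg (sub_nonneg.2 hK1) hB0) hs0]
      rcases hs0.eq_or_lt with hsz | hspos
      · have hnum : |u (t1, x) - u (t2, y)| = 0 :=
          le_antisymm (by rw [← hsz] at hfull; linarith only [hfull]) (abs_nonneg _)
        rw [hnum, zero_div]
        exact hRHS0
      · have hnum0 : 0 ≤ K * (A + B) := mul_nonneg hKpos.le (by linarith)
        have hrat : |u (t1, x) - u (t2, y)| / s ^ α ≤ K * (A + B) * s / s ^ α :=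
          div_le_div₀ (mul_nonneg hnum0 hs0) hfull
            (Real.rpow_pos_of_pos hspos α) le_rfl
        have heq : K * (A + B) * s / s ^ α = K * (A + B) * s ^ (1 - α) := by
          rw [mul_div_assoc, Real.rpow_sub hspos, Real.rpow_one]
        have h2 : s ^ (1 - α) ≤ δ ^ (1 - α) :=
          Real.rpow_le_rpow hs0 hcase.le h1α.le
        rw [hδ1α] at h2
        have h3 : K * (A + B) * s ^ (1 - α) ≤ K * (A + B) * (ε / K) :=
          mul_le_mul_of_nonneg_left h2 hnum0
        have h4 : K * (A + B) * (ε / K) = ε * (B + A) := by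
          field_simp; ring
        have h5 : 0 ≤ 2 * K ^ m * ε ^ (-m) * N := by positivity
        rw [heq] at hrat
        linarith
  have hsemi : semiS d α S u ≤ ε * (B + A) + 2 * K ^ m * ε ^ (-m) * N := by
    apply Real.sSup_le _ hRHS0
    rintro r ⟨⟨⟨t1, x⟩, ⟨t2, y⟩⟩, hPQ, rfl⟩
    exact pair t1 t2 x y hPQ.1 hPQ.2
  have hεm1 : 1 ≤ ε ^ (-m) :=
    Real.one_le_rpow_of_pos_of_le_one_of_nonpos hε0 hε1.le (by linarith)
  have hC2 : 0 ≤ ⨆ i, ⨆ j, holderS d α S (fun P => P.2 (Fin.last d) * uxx i j P) :=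
    Real.iSup_nonneg fun i => Real.iSup_nonneg fun j => holderS_nonneg _ _ _ _
  have hU0 : 0 ≤ holderS d α S u := holderS_nonneg _ _ _ _
  have hBA : B + A ≤ norm2S d α S u ut ux uxx := by
    unfold norm2S
    rw [← hBdef, ← hAdef]
    linarith
  have hNN : N ≤ ε ^ (-m) * N := le_mul_of_one_le_left hN0 hεm1
  have hεBA : ε * (B + A) ≤ ε * norm2S d α S u ut ux uxx :=
    mul_le_mul_of_nonneg_left hBA hε0.le
  have hfold : holderS d α S u = N + semiS d α S u := by rw [hNdef]; rfl
  rw [hfold]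
  linarith only [hsemi, hεBA, hNN]
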